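/- Consider a min-cost flow instance whose edge costs c_e ∈ [0,1] are independent random variables, each having a probability density function bounded from above by φ. Then for every ε ≥ 0 and every edge e ∈ E, the probability of the event E_ε^e is at most εφ, and the probability of the event E'_ε^e is at most εφ. -/

import Mathlib

open MeasureTheory

/-- A feasible integer flow: capacity constraints and budget (flow conservation)
constraints. -/
def IsFlow {V E : Type} [Fintype E] [DecidableEq V]
    (src tgt : E → V) (cap : E → ℕ) (bdg : V → ℤ) (f : E → ℤ) : Prop :=
  (∀ e, 0 ≤ f e ∧ f e ≤ (cap e : ℤ)) ∧
  ∀ v, ((∑ e, if src e = v then f e else 0) - (∑ e, if tgt e = v then f e else 0)) = bdg v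

/-- The cost `c · f` of an integer flow. -/
noncomputable def flowCost {E : Type} [Fintype E] (c : E → ℝ) (f : E → ℤ) : ℝ :=
  ∑ e, c e * (f e : ℝ)

/-- The event `E_ε^e`: there exist two different feasible integer flows `f*` and `f̂`
such that `f*` is optimal, `c·f̂ ≤ c·f* + ε`, `f*_e = 0` and `f̂_e > 0`. -/
def EventZero {V E : Type} [Fintype E] [DecidableEq V]
    (src tgt : E → V) (cap : E → ℕ) (bdg : V → ℤ) (ε : ℝ) (e : E) (c : E → ℝ) : Prop :=
  ∃ fstar fhat : E → ℤ,
    IsFlow src tgt cap bdg fstar ∧ IsFlow src tgt cap bdg fhat ∧ fstar ≠ fhat ∧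
    (∀ f, IsFlow src tgt cap bdg f → flowCost c fstar ≤ flowCost c f) ∧
    flowCost c fhat ≤ flowCost c fstar + ε ∧
    fstar e = 0 ∧ 0 < fhat e

/-- The event `E'_ε^e`: there exist two different feasible integer flows `f*` and `f̂`
such that `f*` is optimal, `c·f̂ ≤ c·f* + ε`, `f*_e = u_e` and `f̂_e < u_e`. -/
def EventCap {V E : Type} [Fintype E] [DecidableEq V]
    (src tgt : E → V) (cap : E → ℕ) (bdg : V → ℤ) (ε : ℝ) (e : E) (c : E → ℝ) : Prop :=
  ∃ fstar fhat : E → ℤ,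
    IsFlow src tgt cap bdg fstar ∧ IsFlow src tgt cap bdg fhat ∧ fstar ≠ fhat ∧
    (∀ f, IsFlow src tgt cap bdg f → flowCost c fstar ≤ flowCost c f) ∧
    flowCost c fhat ≤ flowCost c fstar + ε ∧
    fstar e = (cap e : ℤ) ∧ fhat e < (cap e : ℤ)

/-! ### Auxiliary lemmas -/

lemma flowCost_update {E : Type} [Fintype E] [DecidableEq E]
    (c : E → ℝ) (e : E) (t : ℝ) (f : E → ℤ) :
    flowCost (Function.update c e t) f = flowCost c f + (t - c e) * (f e : ℝ) := by
  have h : ∀ e', Function.update c e t e' * (f e' : ℝ)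
      = c e' * (f e' : ℝ) + (if e' = e then (t - c e) * (f e : ℝ) else 0) := by
    intro e'
    by_cases h : e' = e
    · subst h; simp [Function.update_self]; ring
    · simp [Function.update_of_ne h, h]
  simp only [flowCost, h, Finset.sum_add_distrib, Finset.sum_ite_eq' Finset.univ e,
    Finset.mem_univ, if_true]

lemma measurable_flowCost {E : Type} [Fintype E] (f : E → ℤ) :
    Measurable fun c : E → ℝ => flowCost c f := by
  unfold flowCost
  exact Finset.measurable_sum _ fun e _ => (measurable_pi_apply e).mul_const _

/-- If the event `E_ε^e` holds for two values of the cost of edge `e`, they are within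
`ε` of each other. -/
lemma eventZero_diam {V E : Type} [Fintype E] [DecidableEq V] [DecidableEq E]
    (src tgt : E → V) (cap : E → ℕ) (bdg : V → ℤ) {ε : ℝ} (e : E) (c : E → ℝ)
    {t₁ t₂ : ℝ} (h12 : t₁ ≤ t₂)
    (h₁ : EventZero src tgt cap bdg ε e (Function.update c e t₁))
    (h₂ : EventZero src tgt cap bdg ε e (Function.update c e t₂)) :
    t₂ - t₁ ≤ ε := by
  obtain ⟨f₁, g₁, hf₁, hg₁, -, hopt₁, hcost₁, hf₁e, hg₁e⟩ := h₁
  obtain ⟨f₂, g₂, hf₂, hg₂, -, hopt₂, hcost₂, hf₂e, hg₂e⟩ := h₂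
  have e1 : flowCost c f₁ ≤ flowCost c g₂ + (t₁ - c e) * (g₂ e : ℝ) := by
    have h := hopt₁ g₂ hg₂
    rwa [flowCost_update, flowCost_update, hf₁e, Int.cast_zero, mul_zero, add_zero] at h
  have e2 : flowCost c g₂ + (t₂ - c e) * (g₂ e : ℝ) ≤ flowCost c f₂ + ε := by
    have h := hcost₂
    rwa [flowCost_update, flowCost_update, hf₂e, Int.cast_zero, mul_zero, add_zero] at h
  have e3 : flowCost c f₂ ≤ flowCost c f₁ := by
    have h := hopt₂ f₁ hf₁
    rwa [flowCost_update, flowCost_update, hf₁e, hf₂e, Int.cast_zero, mul_zero, add_zero,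
      add_zero] at h
  have hk : (1 : ℝ) ≤ (g₂ e : ℝ) := by exact_mod_cast hg₂e
  nlinarith [sub_nonneg.2 h12]

/-- If the event `E'_ε^e` holds for two values of the cost of edge `e`, they are within
`ε` of each other. -/
lemma eventCap_diam {V E : Type} [Fintype E] [DecidableEq V] [DecidableEq E]
    (src tgt : E → V) (cap : E → ℕ) (bdg : V → ℤ) {ε : ℝ} (e : E) (c : E → ℝ)
    {t₁ t₂ : ℝ} (h12 : t₁ ≤ t₂)
    (h₁ : EventCap src tgt cap bdg ε e (Function.update c e t₁))
    (h₂ : EventCap src tgt cap bdg ε e (Function.update c e t₂)) :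
    t₂ - t₁ ≤ ε := by
  obtain ⟨f₁, g₁, hf₁, hg₁, -, hopt₁, hcost₁, hf₁e, hg₁e⟩ := h₁
  obtain ⟨f₂, g₂, hf₂, hg₂, -, hopt₂, hcost₂, hf₂e, hg₂e⟩ := h₂
  set u : ℝ := (cap e : ℝ)
  have e1 : flowCost c f₁ + (t₁ - c e) * u ≤ flowCost c f₂ + (t₁ - c e) * u := by
    have h := hopt₁ f₂ hf₂
    rwa [flowCost_update, flowCost_update, hf₁e, hf₂e] at h
  have e2 : flowCost c g₁ + (t₁ - c e) * (g₁ e : ℝ)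
      ≤ flowCost c f₁ + (t₁ - c e) * u + ε := by
    have h := hcost₁
    rwa [flowCost_update, flowCost_update, hf₁e] at h
  have e3 : flowCost c f₂ + (t₂ - c e) * u ≤ flowCost c g₁ + (t₂ - c e) * (g₁ e : ℝ) := by
    have h := hopt₂ g₁ hg₁
    rwa [flowCost_update, flowCost_update, hf₂e] at h
  have hk : (g₁ e : ℝ) ≤ u - 1 := by
    have h : ((g₁ e : ℝ) + 1) ≤ (cap e : ℝ) := by exact_mod_cast hg₁e
    simp only [u]
    linarith
  nlinarith [sub_nonneg.2 h12]

/-- A set of reals of diameter at most `ε` has measure at most `εφ` under a measure with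
density bounded by `φ` and supported in `[0,1]`. -/
lemma measure_diam_le {g : ℝ → ENNReal} (_hgm : Measurable g) {φ : ℝ}
    (hb : ∀ x, g x ≤ ENNReal.ofReal φ) (hs : ∀ x, x ∉ Set.Icc (0 : ℝ) 1 → g x = 0)
    {ε : ℝ} (hε : 0 ≤ ε) (T : Set ℝ)
    (hT : ∀ t₁ ∈ T, ∀ t₂ ∈ T, t₁ ≤ t₂ → t₂ - t₁ ≤ ε) :
    (volume : Measure ℝ).withDensity g T ≤ ENNReal.ofReal (ε * φ) := by
  set μ := (volume : Measure ℝ).withDensity g with hμ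
  set I := Set.Icc (0 : ℝ) 1 with hI
  have hcompl : μ Iᶜ = 0 := by
    rw [hμ, withDensity_apply _ measurableSet_Icc.compl]
    rw [setLIntegral_congr_fun measurableSet_Icc.compl
      (fun x hx => hs x hx)]
    simp
  have h2 : μ (T \ I) = 0 :=
    measure_mono_null (fun x hx => hx.2) hcompl
  have hsplit : μ T ≤ μ (T ∩ I) + μ (T \ I) := measure_le_inter_add_diff μ T I
  rcases (T ∩ I).eq_empty_or_nonempty with hemp | ⟨t0, ht0⟩
  · calc μ T ≤ μ (T ∩ I) + μ (T \ I) := hsplit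
      _ = 0 := by rw [hemp, h2]; simp
      _ ≤ _ := zero_le
  · set a := sInf (T ∩ I) with ha
    have hbdd : BddBelow (T ∩ I) := ⟨0, fun x hx => hx.2.1⟩
    have hsub : T ∩ I ⊆ Set.Icc a (a + ε) := by
      intro t ht
      refine ⟨csInf_le hbdd ht, ?_⟩
      have hlb : t - ε ≤ a := by
        refine le_csInf ⟨t0, ht0⟩ fun s hs' => ?_
        rcases le_total s t with h | h
        · have := hT s hs'.1 t ht.1 h; linarith
        · linarith
      linarith
    have hIcc : μ (Set.Icc a (a + ε)) ≤ ENNReal.ofReal φ * ENNReal.ofReal ε := by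
      rw [hμ, withDensity_apply _ measurableSet_Icc]
      calc ∫⁻ x in Set.Icc a (a + ε), g x
          ≤ ∫⁻ _ in Set.Icc a (a + ε), ENNReal.ofReal φ := lintegral_mono fun x => hb x
        _ = ENNReal.ofReal φ * volume (Set.Icc a (a + ε)) := setLIntegral_const _ _
        _ = ENNReal.ofReal φ * ENNReal.ofReal ε := by
            rw [Real.volume_Icc, add_sub_cancel_left]
    have hmul : ENNReal.ofReal φ * ENNReal.ofReal ε ≤ ENNReal.ofReal (ε * φ) := by
      rcases le_total 0 φ with hφ | hφ
      · rw [← ENNReal.ofReal_mul hφ, mul_comm]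
      · rw [ENNReal.ofReal_of_nonpos hφ, zero_mul]; exact zero_le
    calc μ T ≤ μ (T ∩ I) + μ (T \ I) := hsplit
      _ = μ (T ∩ I) := by rw [h2, add_zero]
      _ ≤ μ (Set.Icc a (a + ε)) := measure_mono hsub
      _ ≤ ENNReal.ofReal φ * ENNReal.ofReal ε := hIcc
      _ ≤ ENNReal.ofReal (ε * φ) := hmul

/-- Generic measurability of the event sets. -/
lemma measurableSet_event {V E : Type} [Fintype E] [DecidableEq V]
    (src tgt : E → V) (cap : E → ℕ) (bdg : V → ℤ) (ε : ℝ)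
    (P : (E → ℤ) → (E → ℤ) → Prop) :
    MeasurableSet {c : E → ℝ | ∃ fstar fhat : E → ℤ,
      IsFlow src tgt cap bdg fstar ∧ IsFlow src tgt cap bdg fhat ∧ fstar ≠ fhat ∧
      (∀ f, IsFlow src tgt cap bdg f → flowCost c fstar ≤ flowCost c f) ∧
      flowCost c fhat ≤ flowCost c fstar + ε ∧ P fstar fhat} := by
  classical
  have hset : {c : E → ℝ | ∃ fstar fhat : E → ℤ,
      IsFlow src tgt cap bdg fstar ∧ IsFlow src tgt cap bdg fhat ∧ fstar ≠ fhat ∧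
      (∀ f, IsFlow src tgt cap bdg f → flowCost c fstar ≤ flowCost c f) ∧
      flowCost c fhat ≤ flowCost c fstar + ε ∧ P fstar fhat}
      = ⋃ fstar : E → ℤ, ⋃ fhat : E → ℤ, ⋃ (_ : IsFlow src tgt cap bdg fstar),
        ⋃ (_ : IsFlow src tgt cap bdg fhat), ⋃ (_ : fstar ≠ fhat), ⋃ (_ : P fstar fhat),
        ((⋂ f : E → ℤ, {c : E → ℝ | IsFlow src tgt cap bdg f →
            flowCost c fstar ≤ flowCost c f}) ∩
          {c : E → ℝ | flowCost c fhat ≤ flowCost c fstar + ε}) := by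
    ext c
    simp only [Set.mem_setOf_eq, Set.mem_iUnion, Set.mem_inter_iff, Set.mem_iInter,
      Set.mem_setOf_eq]
    constructor
    · rintro ⟨fs, fh, h1, h2, h3, h4, h5, h6⟩
      exact ⟨fs, fh, h1, h2, h3, h6, h4, h5⟩
    · rintro ⟨fs, fh, h1, h2, h3, h6, h4, h5⟩
      exact ⟨fs, fh, h1, h2, h3, h4, h5, h6⟩
  rw [hset]
  refine MeasurableSet.iUnion fun fstar => MeasurableSet.iUnion fun fhat =>
    MeasurableSet.iUnion fun _ => MeasurableSet.iUnion fun _ =>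
    MeasurableSet.iUnion fun _ => MeasurableSet.iUnion fun _ => ?_
  refine MeasurableSet.inter (MeasurableSet.iInter fun f => ?_) ?_
  · by_cases hf : IsFlow src tgt cap bdg f
    · simp only [hf, forall_true_left]
      exact measurableSet_le (measurable_flowCost fstar) (measurable_flowCost f)
    · simp only [hf, false_implies, Set.setOf_true]
      exact MeasurableSet.univ
  · exact measurableSet_le (measurable_flowCost fhat)
      ((measurable_flowCost fstar).add_const ε)

/-- If the edge costs are independent random variables with values in `[0,1]` whose
densities are bounded by `φ`, then for every `ε ≥ 0` and every edge `e` the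
probability of each of the events `E_ε^e` and `E'_ε^e` is at most `ε φ`. -/
theorem event_prob_le
    {V E : Type} [Fintype V] [Fintype E] [DecidableEq V]
    (src tgt : E → V) (cap : E → ℕ) (bdg : V → ℤ)
    (φ ε : ℝ) (hε : 0 ≤ ε)
    (g : E → ℝ → ENNReal)
    (hgmeas : ∀ e, Measurable (g e))
    (hgbound : ∀ e x, g e x ≤ ENNReal.ofReal φ)
    (hgsupp : ∀ e x, x ∉ Set.Icc (0 : ℝ) 1 → g e x = 0)
    (hgprob : ∀ e, IsProbabilityMeasure ((volume : Measure ℝ).withDensity (g e)))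
    (e : E) :
    Measure.pi (fun e' : E => (volume : Measure ℝ).withDensity (g e'))
        {c : E → ℝ | EventZero src tgt cap bdg ε e c} ≤ ENNReal.ofReal (ε * φ) ∧
    Measure.pi (fun e' : E => (volume : Measure ℝ).withDensity (g e'))
        {c : E → ℝ | EventCap src tgt cap bdg ε e c} ≤ ENNReal.ofReal (ε * φ) := by
  classical
  set μ := fun e' : E => (volume : Measure ℝ).withDensity (g e') with hμdef
  haveI : ∀ e', IsProbabilityMeasure (μ e') := hgprob
  haveI : ∀ e', SigmaFinite (μ e') := fun e' => inferInstance
  have key : ∀ S : Set (E → ℝ), MeasurableSet S →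
      (∀ (x : E → ℝ) (t₁ t₂ : ℝ), t₁ ≤ t₂ →
        Function.update x e t₁ ∈ S → Function.update x e t₂ ∈ S → t₂ - t₁ ≤ ε) →
      Measure.pi μ S ≤ ENNReal.ofReal (ε * φ) := by
    intro S hS hdiam
    have hind : Measurable (S.indicator (1 : (E → ℝ) → ENNReal)) :=
      measurable_one.indicator hS
    have h1 : Measure.pi μ S = ∫⁻ x, S.indicator 1 x ∂(Measure.pi μ) :=
      (lintegral_indicator_one hS).symm
    rw [h1, lintegral_eq_lmarginal_univ (fun _ => (0 : ℝ))]
    rw [lmarginal_erase' _ hind (Finset.mem_univ e)]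
    have hbound : ∀ x : E → ℝ,
        (∫⁻ t, S.indicator 1 (Function.update x e t) ∂(μ e)) ≤ ENNReal.ofReal (ε * φ) := by
      intro x
      set T : Set ℝ := {t : ℝ | Function.update x e t ∈ S} with hT
      have hTm : MeasurableSet T := hS.preimage (measurable_update x)
      have hrw : ∀ t : ℝ, S.indicator (1 : (E → ℝ) → ENNReal) (Function.update x e t)
          = T.indicator 1 t := by
        intro t
        by_cases h : Function.update x e t ∈ S <;> simp [Set.indicator, h, hT]
      calc (∫⁻ t, S.indicator 1 (Function.update x e t) ∂(μ e))
          = ∫⁻ t, T.indicator 1 t ∂(μ e) := by simp_rw [hrw]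
        _ = μ e T := lintegral_indicator_one hTm
        _ ≤ ENNReal.ofReal (ε * φ) := by
            refine measure_diam_le (hgmeas e) (hgbound e) (hgsupp e) hε T ?_
            intro t₁ ht₁ t₂ ht₂ h12
            exact hdiam x t₁ t₂ h12 ht₁ ht₂
    calc (∫⋯∫⁻_(Finset.univ.erase e),
            (fun x => ∫⁻ t, S.indicator 1 (Function.update x e t) ∂(μ e)) ∂μ)
            (fun _ => (0 : ℝ))
        ≤ (∫⋯∫⁻_(Finset.univ.erase e),
            (fun _ => ENNReal.ofReal (ε * φ)) ∂μ) (fun _ => (0 : ℝ)) :=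
          lmarginal_mono (fun x => hbound x) _
      _ = ENNReal.ofReal (ε * φ) := by
          simp [lmarginal, lintegral_const, measure_univ, mul_one]
  constructor
  · refine key _ ?_ ?_
    · exact measurableSet_event src tgt cap bdg ε
        (fun fstar fhat => fstar e = 0 ∧ 0 < fhat e)
    · intro x t₁ t₂ h12 h₁ h₂
      exact eventZero_diam src tgt cap bdg e x h12 h₁ h₂
  · refine key _ ?_ ?_
    · exact measurableSet_event src tgt cap bdg ε
        (fun fstar fhat => fstar e = (cap e : ℤ) ∧ fhat e < (cap e : ℤ))
    · intro x t₁ t₂ h12 h₁ h₂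
      exact eventCap_diam src tgt cap bdg e x h12 h₁ h₂
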